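/- Let π: (X, μ) → (Y, ν) be a factor of probability spaces with disintegration (μ_y), and let K be a bounded measurable kernel on the relatively independent product X ×_Y X, bounded by C > 0. Let M be a countable set of functions in the conditional Hilbert space over Y which is conditionally orthonormal: E(f ḡ|Y) = 0 for distinct f, g ∈ M and E(|f|²|Y) = 1_E for some measurable E (depending on f) for each f ∈ M. Then Σ_{f∈M} ‖K ∗_Y f‖²_{L²(X)} ≤ C² < ∞. -/

import Mathlib

open MeasureTheory ProbabilityTheory
open scoped ENNReal
open ComplexConjugate
set_option maxHeartbeats 1000000

lemma eLpNorm_two_eq {X : Type*} [MeasurableSpace X] (ρ : Measure X) (f : X → ℂ) :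
    eLpNorm f 2 ρ = (∫⁻ x, (‖f x‖₊ : ℝ≥0∞) ^ 2 ∂ρ) ^ (1/2 : ℝ) := by
  rw [eLpNorm_eq_lintegral_rpow_enorm_toReal (by norm_num) (by norm_num)]
  norm_num
  rfl

lemma bessel_fiber {X : Type*} [MeasurableSpace X] (ρ : Measure X) [IsProbabilityMeasure ρ]
    (F : ℕ → X → ℂ) (hFm : ∀ i, Measurable (F i))
    (horth : ∀ i j : ℕ, i ≠ j → ∫ x, F i x * conj (F j x) ∂ρ = 0)
    (hn : ∀ i, (∫⁻ x, (‖F i x‖₊ : ℝ≥0∞) ^ 2 ∂ρ = 0) ∨ (∫⁻ x, (‖F i x‖₊ : ℝ≥0∞) ^ 2 ∂ρ = 1))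
    (v : X → ℂ) (hvm : Measurable v) (C : ℝ) (hC : 0 < C) (hvb : ∀ x, ‖v x‖ ≤ C) :
    ∑' i, (‖∫ x, v x * F i x ∂ρ‖₊ : ℝ≥0∞) ^ 2 ≤ ENNReal.ofReal (C ^ 2) := by
  classical
  have hFL2 : ∀ i, MemLp (F i) 2 ρ := by
    intro i
    refine ⟨(hFm i).aestronglyMeasurable, ?_⟩
    rw [eLpNorm_two_eq]
    have h1 : ∫⁻ x, (‖F i x‖₊ : ℝ≥0∞) ^ 2 ∂ρ ≤ 1 := by rcases hn i with h | h <;> simp [h]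
    calc (∫⁻ x, (‖F i x‖₊ : ℝ≥0∞) ^ 2 ∂ρ) ^ (1/2:ℝ) ≤ (1:ℝ≥0∞) ^ (1/2:ℝ) :=
          ENNReal.rpow_le_rpow h1 (by norm_num)
      _ < ⊤ := by simp
  have hwm : Measurable fun x => conj (v x) := (Complex.continuous_conj.measurable.comp hvm)
  have hwL2 : MemLp (fun x => conj (v x)) 2 ρ :=
    MemLp.of_bound hwm.aestronglyMeasurable C (Filter.Eventually.of_forall fun x => by
      simpa using hvb x)
  set w : Lp ℂ 2 ρ := hwL2.toLp _ with hw
  set e : ℕ → Lp ℂ 2 ρ := fun i => (hFL2 i).toLp (F i) with he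
  have hinner_we : ∀ i, (inner ℂ w (e i) : ℂ) = ∫ x, v x * F i x ∂ρ := by
    intro i
    rw [L2.inner_def]
    refine integral_congr_ae ?_
    filter_upwards [hwL2.coeFn_toLp, (hFL2 i).coeFn_toLp] with x h1 h2
    rw [RCLike.inner_apply', h1, h2, RingHomCompTriple.comp_apply, RingHom.id_apply]
  have hinner_ee : ∀ i j, i ≠ j → (inner ℂ (e i) (e j) : ℂ) = 0 := by
    intro i j hij
    rw [L2.inner_def]
    have : ∫ x, (inner ℂ (e i x) (e j x) : ℂ) ∂ρ = ∫ x, conj (F i x) * F j x ∂ρ := by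
      refine integral_congr_ae ?_
      filter_upwards [(hFL2 i).coeFn_toLp, (hFL2 j).coeFn_toLp] with x h1 h2
      rw [RCLike.inner_apply', h1, h2]
    rw [this]
    have := horth j i hij.symm
    calc ∫ x, conj (F i x) * F j x ∂ρ = conj (∫ x, F i x * conj (F j x) ∂ρ) := by
          rw [← integral_conj]; congr 1; ext x; simp [mul_comm]
      _ = 0 := by rw [horth i j hij]; simp
  -- norm of e i is 1 when the condition is 1, and F i is a.e. zero otherwise
  have hnorm_e : ∀ i, (∫⁻ x, (‖F i x‖₊ : ℝ≥0∞) ^ 2 ∂ρ = 1) → ‖e i‖ = 1 := by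
    intro i hi
    rw [Lp.norm_toLp, eLpNorm_two_eq, hi]
    simp
  have hzero : ∀ i, (∫⁻ x, (‖F i x‖₊ : ℝ≥0∞) ^ 2 ∂ρ = 0) → ∫ x, v x * F i x ∂ρ = 0 := by
    intro i hi
    have h0 : ∀ᵐ x ∂ρ, F i x = 0 := by
      have := (lintegral_eq_zero_iff (by
        exact ((measurable_coe_nnreal_ennreal.comp (hFm i).nnnorm).pow_const 2))).mp hi
      filter_upwards [this] with x hx
      simpa using hx
    rw [show (0:ℂ) = ∫ x, (0:ℂ) ∂ρ by simp]
    refine integral_congr_ae ?_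
    filter_upwards [h0] with x hx
    rw [hx, mul_zero]
  -- orthonormal subfamily
  set P : ℕ → Prop := fun i => ∫⁻ x, (‖F i x‖₊ : ℝ≥0∞) ^ 2 ∂ρ = 1 with hP
  have hON : Orthonormal ℂ (fun j : {i // P i} => e j.1) := by
    rw [orthonormal_iff_ite]
    intro i j
    by_cases hij : i = j
    · subst hij
      simp only [if_pos rfl]
      rw [inner_self_eq_norm_sq_to_K, hnorm_e i.1 i.2]
      norm_num
    · rw [if_neg hij]
      exact hinner_ee i.1 j.1 (fun h => hij (Subtype.ext h))
  -- norm of w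
  have hwnorm : ‖w‖ ≤ C := by
    rw [Lp.norm_toLp]
    have hb : eLpNorm (fun x => conj (v x)) 2 ρ ≤ ENNReal.ofReal C := by
      have := eLpNorm_le_of_ae_bound (μ := ρ) (p := 2)
        (f := fun x => conj (v x)) (C := C) (Filter.Eventually.of_forall fun x => by simpa using hvb x)
      simpa using this
    calc (eLpNorm (fun x => conj (v x)) 2 ρ).toReal ≤ (ENNReal.ofReal C).toReal :=
          ENNReal.toReal_mono ENNReal.ofReal_ne_top hb
      _ = C := ENNReal.toReal_ofReal hC.le
  -- main estimate
  have key : ∀ s : Finset ℕ, ∑ i ∈ s, ‖∫ x, v x * F i x ∂ρ‖ ^ 2 ≤ C ^ 2 := by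
    intro s
    have h1 : ∑ i ∈ s, ‖∫ x, v x * F i x ∂ρ‖ ^ 2
        = ∑ i ∈ s.filter P, ‖∫ x, v x * F i x ∂ρ‖ ^ 2 := by
      refine (Finset.sum_filter_of_ne ?_).symm
      intro i hi hne
      rcases hn i with h | h
      · exact absurd (by rw [hzero i h]; simp) hne
      · exact h
    have h2 : ∑ j ∈ (s.filter P).subtype P, ‖(inner ℂ (e j.1) w : ℂ)‖ ^ 2
        = ∑ i ∈ s.filter P, ‖∫ x, v x * F i x ∂ρ‖ ^ 2 := by
      rw [Finset.sum_subtype_eq_sum_filter (fun i => ‖(inner ℂ (e i) w : ℂ)‖ ^ 2), Finset.filter_filter]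
      refine Finset.sum_congr (by congr 1; ext i; tauto) ?_
      intro i hi
      rw [← hinner_we i, ← norm_inner_symm]
    rw [h1, ← h2]
    calc ∑ j ∈ (s.filter P).subtype P, ‖(inner ℂ (e j.1) w : ℂ)‖ ^ 2
        ≤ ‖w‖ ^ 2 := hON.sum_inner_products_le w
      _ ≤ C ^ 2 := by
          have := pow_le_pow_left₀ (norm_nonneg w) hwnorm 2
          simpa using this
  -- pass to ℝ≥0∞
  rw [ENNReal.tsum_eq_iSup_sum]
  refine iSup_le fun s => ?_
  have : ∑ i ∈ s, (‖∫ x, v x * F i x ∂ρ‖₊ : ℝ≥0∞) ^ 2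
      = ENNReal.ofReal (∑ i ∈ s, ‖∫ x, v x * F i x ∂ρ‖ ^ 2) := by
    rw [ENNReal.ofReal_sum_of_nonneg (fun i _ => by positivity)]
    refine Finset.sum_congr rfl fun i _ => ?_
    rw [ENNReal.ofReal_pow (norm_nonneg _), ofReal_norm, enorm_eq_nnnorm]
  rw [this]
  exact ENNReal.ofReal_le_ofReal (key s)


/-- Conditional Bessel bound: if `K` is a kernel on the relatively independent product
bounded by `C > 0` and `(F i)` is a countable conditionally orthonormal family
(fibrewise orthogonal, with fibrewise squared norm an indicator `1_E`), then
`Σ_i ‖K ∗_Y F i‖²_{L²(X)} ≤ C²`. -/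
theorem conditional_bessel_sum_bound
    {X Y : Type*} [MeasurableSpace X] [MeasurableSpace Y]
    (μ : Measure X) (ν : Measure Y) [IsProbabilityMeasure μ] [IsProbabilityMeasure ν]
    (π : X → Y) (hπ : Measurable π)
    (κ : Kernel Y X) [IsMarkovKernel κ]
    (hμ : μ = ν.bind fun y => κ y)
    (hsupp : ∀ᵐ y ∂ν, ∀ᵐ x ∂κ y, π x = y)
    (K : X → X → ℂ) (hK : Measurable (Function.uncurry K))
    (C : ℝ) (hC : 0 < C) (hKb : ∀ x x', ‖K x x'‖ ≤ C)
    (F : ℕ → X → ℂ) (hFm : ∀ i, Measurable (F i))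
    (horth : ∀ i j : ℕ, i ≠ j →
      ∀ᵐ y ∂ν, ∫ x, F i x * (starRingEnd ℂ) (F j x) ∂κ y = 0)
    (hnorm : ∀ i : ℕ, ∃ E : Set Y, MeasurableSet E ∧
      ∀ᵐ y ∂ν, ∫⁻ x, (‖F i x‖₊ : ℝ≥0∞) ^ 2 ∂κ y =
        E.indicator (fun _ => (1 : ℝ≥0∞)) y) :
    ∑' i : ℕ, ∫⁻ x, (‖∫ x', K x x' * F i x' ∂κ (π x)‖₊ : ℝ≥0∞) ^ 2 ∂μ ≤
      ENNReal.ofReal (C ^ 2) := by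
  classical
  -- measurability of the convolution
  set κ' : Kernel X X := κ.comap π hπ with hκ'
  have hκ'app : ∀ x, κ' x = κ (π x) := fun x => Kernel.comap_apply κ hπ x
  have hgm : ∀ i, Measurable fun x => (‖∫ x', K x x' * F i x' ∂κ (π x)‖₊ : ℝ≥0∞) ^ 2 := by
    intro i
    have hf : StronglyMeasurable fun p : X × X => K p.1 p.2 * F i p.2 :=
      (hK.mul ((hFm i).comp measurable_snd)).stronglyMeasurable
    have := hf.integral_kernel_prod_right' (κ := κ')
    simp only [hκ'app] at this
    exact (measurable_coe_nnreal_ennreal.comp this.measurable.nnnorm).pow_const 2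
  rw [← lintegral_tsum fun i => (hgm i).aemeasurable]
  -- the set of good fibres
  set I : ℕ → ℕ → Y → ℂ := fun i j y => ∫ x, F i x * (starRingEnd ℂ) (F j x) ∂κ y with hI
  set L : ℕ → Y → ℝ≥0∞ := fun i y => ∫⁻ x, (‖F i x‖₊ : ℝ≥0∞) ^ 2 ∂κ y with hL
  have hIm : ∀ i j, Measurable (I i j) := by
    intro i j
    have hf : StronglyMeasurable fun p : Y × X => F i p.2 * (starRingEnd ℂ) (F j p.2) :=
      (((hFm i).comp measurable_snd).mul
        (Complex.continuous_conj.measurable.comp ((hFm j).comp measurable_snd))).stronglyMeasurable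
    exact (hf.integral_kernel_prod_right' (κ := κ)).measurable
  have hLm : ∀ i, Measurable (L i) :=
    fun i => Measurable.lintegral_kernel ((measurable_coe_nnreal_ennreal.comp
      (hFm i).nnnorm).pow_const 2)
  set A : Set Y := (⋂ i, ⋂ j, {y | i ≠ j → I i j y = 0}) ∩
      (⋂ i, {y | L i y = 0 ∨ L i y = 1}) with hA
  have hAmeas : MeasurableSet A := by
    refine MeasurableSet.inter (MeasurableSet.iInter fun i => MeasurableSet.iInter fun j => ?_)
      (MeasurableSet.iInter fun i => ?_)
    · by_cases hij : i = j
      · simp only [hij]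
        simp only [ne_eq, not_true_eq_false, false_implies]
        exact MeasurableSet.univ.congr (by ext y; simp)
      · have : {y | i ≠ j → I i j y = 0} = I i j ⁻¹' {0} := by ext y; simp [hij]
        rw [this]
        exact (hIm i j) (measurableSet_singleton 0)
    · have : {y | L i y = 0 ∨ L i y = 1} = L i ⁻¹' {0, 1} := by ext y; simp
      rw [this]
      exact (hLm i) (MeasurableSet.insert (measurableSet_singleton 1) 0)
  have hAae : ∀ᵐ y ∂ν, y ∈ A := by
    have h1 : ∀ᵐ y ∂ν, ∀ i j : ℕ, i ≠ j → I i j y = 0 := by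
      rw [ae_all_iff]
      intro i
      rw [ae_all_iff]
      intro j
      by_cases hij : i = j
      · filter_upwards with y h; exact absurd hij h
      · filter_upwards [horth i j hij] with y hy _; exact hy
    have h2 : ∀ᵐ y ∂ν, ∀ i : ℕ, L i y = 0 ∨ L i y = 1 := by
      rw [ae_all_iff]
      intro i
      obtain ⟨E, hEm, hE⟩ := hnorm i
      filter_upwards [hE] with y hy
      by_cases hyE : y ∈ E
      · exact Or.inr (by show ∫⁻ x, (‖F i x‖₊ : ℝ≥0∞) ^ 2 ∂κ y = 1
                         rw [hy, Set.indicator_of_mem hyE])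
      · exact Or.inl (by show ∫⁻ x, (‖F i x‖₊ : ℝ≥0∞) ^ 2 ∂κ y = 0
                         rw [hy, Set.indicator_of_notMem hyE])
    filter_upwards [h1, h2] with y hy1 hy2
    exact ⟨Set.mem_iInter.mpr fun i => Set.mem_iInter.mpr fun j => hy1 i j,
      Set.mem_iInter.mpr fun i => hy2 i⟩
  -- transfer to μ
  have hμA : ∀ᵐ x ∂μ, π x ∈ A := by
    rw [ae_iff]
    have hset : {x | ¬ π x ∈ A} = π ⁻¹' Aᶜ := rfl
    rw [hset, hμ, Measure.bind_apply (hπ hAmeas.compl) κ.measurable.aemeasurable]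
    rw [lintegral_eq_zero_iff (κ.measurable_coe (hπ hAmeas.compl))]
    filter_upwards [hAae, hsupp] with y hyA hysupp
    rw [Pi.zero_apply, ← le_zero_iff]
    calc κ y (π ⁻¹' Aᶜ) ≤ κ y {x | π x ≠ y} :=
          measure_mono fun x hx hxy => hx (hxy.symm ▸ hyA)
      _ = 0 := ae_iff.mp hysupp
  -- conclude
  calc ∫⁻ x, ∑' i, (‖∫ x', K x x' * F i x' ∂κ (π x)‖₊ : ℝ≥0∞) ^ 2 ∂μ
      ≤ ∫⁻ _, ENNReal.ofReal (C ^ 2) ∂μ := by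
        refine lintegral_mono_ae ?_
        filter_upwards [hμA] with x hx
        have hx1 := hx.1
        have hx2 := hx.2
        simp only [Set.mem_iInter] at hx1 hx2
        exact bessel_fiber (κ (π x)) F hFm (fun i j hij => hx1 i j hij) (fun i => hx2 i)
          (fun x' => K x x') (hK.comp measurable_prodMk_left) C hC (hKb x)
    _ = ENNReal.ofReal (C ^ 2) := by simp
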